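/- arXiv:2602.11555 — 2 statements merged into one kernel-verified Lean document; each statement's English description precedes it below -/
import Mathlib

section
/- Monotonicity of the component velocity diameters: let T ∈ (0,∞) and let (x, v) be a solution of the ICS system on [0,T] with sup_i(‖x_i(0)‖ + ‖v_i(0)‖) < ∞. Then for each k ∈ {1,…,d}, the component velocity diameter t ↦ D_v^(k)(t) = M^(k)(t) − m^(k)(t) = sup_{i,j≥1}|v_i^k(t) − v_j^k(t)| is non-increasing on [0,T]. -/
open Filter MeasureTheory
open scoped Topology

noncomputable section

/-- Componentwise sign-power map `Γ`. -/
def Gam (d : ℕ) (α : ℝ) (v : EuclideanSpace ℝ (Fin d)) : EuclideanSpace ℝ (Fin d) :=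
  WithLp.toLp 2 (fun k => Real.sign (v k) * |v k| ^ α)

/-- Right-hand side of the ICS velocity equation. -/
def icsRHS (d : ℕ) (κ α : ℝ) (m : ℕ → ℝ) (ψ : ℝ → ℝ)
    (x v : ℕ → ℝ → EuclideanSpace ℝ (Fin d)) (i : ℕ) (t : ℝ) :
    EuclideanSpace ℝ (Fin d) :=
  κ • ∑' j, (m j * ψ ‖x j t - x i t‖) • Gam d α (v j t - v i t)

/-- Solution of the infinite Cucker–Smale system on the set `s`, satisfying the ODE on `sInt`:
uniform boundedness on compact subsets, continuity, `ẋᵢ = vᵢ`, and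
`v̇ᵢ = κ ∑ⱼ mⱼ ψ(‖xⱼ-xᵢ‖) Γ(vⱼ-vᵢ)` with the series converging absolutely. -/
def IsICSSolOn (d : ℕ) (κ α : ℝ) (m : ℕ → ℝ) (ψ : ℝ → ℝ)
    (x v : ℕ → ℝ → EuclideanSpace ℝ (Fin d)) (s sInt : Set ℝ) : Prop :=
  (∀ K : Set ℝ, K ⊆ s → IsCompact K → ∃ C : ℝ, ∀ i, ∀ t ∈ K, ‖x i t‖ + ‖v i t‖ ≤ C) ∧
  (∀ i, ContinuousOn (x i) s) ∧
  (∀ i, ContinuousOn (v i) s) ∧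
  (∀ i, ∀ t ∈ sInt,
      HasDerivAt (x i) (v i t) t ∧
      Summable (fun j => ‖(m j * ψ ‖x j t - x i t‖) • Gam d α (v j t - v i t)‖) ∧
      HasDerivAt (v i) (icsRHS d κ α m ψ x v i t) t)

/-- Upper right Dini derivative `D⁺f(t) = limsup_{h→0⁺} (f(t+h)-f(t))/h`. -/
def diniUR (f : ℝ → ℝ) (t : ℝ) : ℝ :=
  limsup (fun h => (f (t + h) - f t) / h) (𝓝[>] (0 : ℝ))

/-- Lower right Dini derivative `D⁻f(t) = liminf_{h→0⁺} (f(t+h)-f(t))/h`. -/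
def diniLR (f : ℝ → ℝ) (t : ℝ) : ℝ :=
  liminf (fun h => (f (t + h) - f t) / h) (𝓝[>] (0 : ℝ))

/-- `M^(k)(t) = sup_i v_i^k(t)`. -/
def Msup (d : ℕ) (v : ℕ → ℝ → EuclideanSpace ℝ (Fin d)) (k : Fin d) (t : ℝ) : ℝ :=
  ⨆ i, v i t k

/-- `m^(k)(t) = inf_i v_i^k(t)`. -/
def minf (d : ℕ) (v : ℕ → ℝ → EuclideanSpace ℝ (Fin d)) (k : Fin d) (t : ℝ) : ℝ :=
  ⨅ i, v i t k

/-- Component velocity diameter `D_v^(k)(t) = M^(k)(t) - m^(k)(t)`. -/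
def Dv (d : ℕ) (v : ℕ → ℝ → EuclideanSpace ℝ (Fin d)) (k : Fin d) (t : ℝ) : ℝ :=
  Msup d v k t - minf d v k t

/-- Position diameter `D_x(t) = sup_{i,j} ‖x_i(t) - x_j(t)‖`. -/
def Dx (d : ℕ) (x : ℕ → ℝ → EuclideanSpace ℝ (Fin d)) (t : ℝ) : ℝ :=
  ⨆ p : ℕ × ℕ, ‖x p.1 t - x p.2 t‖

/-- Weighted `ℓ²_m` seminorm. -/
def wnorm (d : ℕ) (m : ℕ → ℝ) (u : ℕ → EuclideanSpace ℝ (Fin d)) : ℝ :=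
  Real.sqrt (∑' i, m i * ‖u i‖ ^ 2)


lemma abs_coord_le {d : ℕ} (u : EuclideanSpace ℝ (Fin d)) (k : Fin d) : |u k| ≤ ‖u‖ := by
  rw [EuclideanSpace.norm_eq]
  have h1 : |u k| = Real.sqrt (‖u k‖ ^ 2) := by
    rw [Real.sqrt_sq (norm_nonneg _)]; simp [Real.norm_eq_abs]
  rw [h1]
  exact Real.sqrt_le_sqrt
    (Finset.single_le_sum (f := fun i => ‖u i‖ ^ 2) (fun i _ => sq_nonneg _) (Finset.mem_univ k))

lemma weight_mul_le {ψr g u : ℝ} (h0 : 0 ≤ ψr) (h1 : ψr ≤ 1) (hgu : g ≤ u) (hu : 0 ≤ u) :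
    ψr * g ≤ u := by
  rcases le_or_gt g 0 with h | h
  · exact le_trans (mul_nonpos_of_nonneg_of_nonpos h0 h) hu
  · calc ψr * g ≤ 1 * g := mul_le_mul_of_nonneg_right h1 h.le
      _ = g := one_mul g
      _ ≤ u := hgu

lemma sign_abs_rpow_le {w b α : ℝ} (hα : 0 ≤ α) (hwb : w ≤ b) (hb : 0 ≤ b) :
    Real.sign w * |w| ^ α ≤ b ^ α := by
  rcases lt_trichotomy w 0 with h | h | h
  · rw [Real.sign_of_neg h]
    nlinarith [Real.rpow_nonneg (abs_nonneg w) α, Real.rpow_nonneg hb α]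
  · simp [h, Real.sign_zero, Real.rpow_nonneg hb α]
  · rw [Real.sign_of_pos h, one_mul, abs_of_pos h]
    exact Real.rpow_le_rpow h.le hwb hα

lemma neg_rpow_le_sign_abs {w b α : ℝ} (hα : 0 ≤ α) (hwb : -b ≤ w) (hb : 0 ≤ b) :
    -(b ^ α) ≤ Real.sign w * |w| ^ α := by
  have := sign_abs_rpow_le (w := -w) (b := b) hα (by linarith) hb
  rw [Real.sign_neg, abs_neg] at this
  linarith

/-- One-sided mean value inequality with derivative only on the open interval. -/
lemma deriv_le_bound {f : ℝ → ℝ} {a b L : ℝ} (hab : a ≤ b)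
    (hc : ContinuousOn f (Set.Icc a b))
    (hd : ∀ s ∈ Set.Ioo a b, ∃ f', HasDerivAt f f' s ∧ f' ≤ L) :
    f b - f a ≤ L * (b - a) := by
  set g : ℝ → ℝ := fun s => L * s - f s with hg
  have hmono : MonotoneOn g (Set.Icc a b) := by
    apply monotoneOn_of_deriv_nonneg (convex_Icc a b)
    · exact (continuous_const.mul continuous_id).continuousOn.sub hc
    · intro s hs
      rw [interior_Icc] at hs
      obtain ⟨f', hf', _⟩ := hd s hs
      exact (((hasDerivAt_id s).const_mul L).sub hf').differentiableAt.differentiableWithinAt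
    · intro s hs
      rw [interior_Icc] at hs
      obtain ⟨f', hf', hle⟩ := hd s hs
      have hgd : HasDerivAt g (L * 1 - f') s := ((hasDerivAt_id s).const_mul L).sub hf'
      rw [hgd.deriv]
      linarith
  have := hmono (Set.left_mem_Icc.2 hab) (Set.right_mem_Icc.2 hab) hab
  simp only [hg] at this
  linarith

/-- The component velocity diameter
`D_v^(k)(t) = M^(k)(t) − m^(k)(t)` is non-increasing on `[0,T]`. -/
theorem stmt6 (d : ℕ) (hd : 1 ≤ d) (κ : ℝ) (hκ : 0 < κ) (α : ℝ) (hα0 : 0 < α) (hα1 : α < 1)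
    (m : ℕ → ℝ) (hm0 : ∀ j, 0 ≤ m j) (hmS : Summable m) (hm1 : ∑' j, m j = 1)
    (ψ : ℝ → ℝ) (hψLip : ∃ L : NNReal, LipschitzOnWith L ψ (Set.Ici 0))
    (hψanti : AntitoneOn ψ (Set.Ici 0)) (hψ0 : ψ 0 = 1)
    (hψnn : ∀ r, 0 ≤ r → 0 ≤ ψ r)
    (T : ℝ) (hT : 0 < T)
    (x v : ℕ → ℝ → EuclideanSpace ℝ (Fin d))
    (hsol : IsICSSolOn d κ α m ψ x v (Set.Icc 0 T) (Set.Ioo 0 T))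
    (hinit : ∃ C : ℝ, ∀ i, ‖x i 0‖ + ‖v i 0‖ ≤ C)
    (k : Fin d) :
    AntitoneOn (Dv d v k) (Set.Icc 0 T) ∧
    ∀ t ∈ Set.Icc (0:ℝ) T, Dv d v k t = ⨆ p : ℕ × ℕ, |v p.1 t k - v p.2 t k| := by
  classical
  obtain ⟨C, hC⟩ := hsol.1 (Set.Icc 0 T) subset_rfl isCompact_Icc
  have hvC : ∀ i, ∀ t ∈ Set.Icc (0:ℝ) T, ‖v i t‖ ≤ C := fun i t ht =>
    le_trans (le_add_of_nonneg_left (norm_nonneg _)) (hC i t ht)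
  have hC0 : (0:ℝ) ≤ C := le_trans (norm_nonneg _) (hvC 0 0 ⟨le_refl 0, hT.le⟩)
  have hcoord : ∀ i, ∀ t ∈ Set.Icc (0:ℝ) T, |v i t k| ≤ C := fun i t ht =>
    (abs_coord_le _ _).trans (hvC i t ht)
  have hbddA : ∀ t ∈ Set.Icc (0:ℝ) T, BddAbove (Set.range fun i => v i t k) := by
    intro t ht
    exact ⟨C, by rintro _ ⟨i, rfl⟩; exact (abs_le.1 (hcoord i t ht)).2⟩
  have hbddB : ∀ t ∈ Set.Icc (0:ℝ) T, BddBelow (Set.range fun i => v i t k) := by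
    intro t ht
    exact ⟨-C, by rintro _ ⟨i, rfl⟩; exact (abs_le.1 (hcoord i t ht)).1⟩
  have hleM : ∀ t ∈ Set.Icc (0:ℝ) T, ∀ i, v i t k ≤ Msup d v k t := fun t ht i =>
    le_ciSup (hbddA t ht) i
  have hmle : ∀ t ∈ Set.Icc (0:ℝ) T, ∀ i, minf d v k t ≤ v i t k := fun t ht i =>
    ciInf_le (hbddB t ht) i
  have hMC : ∀ t ∈ Set.Icc (0:ℝ) T, Msup d v k t ≤ C := fun t ht =>
    ciSup_le fun i => (abs_le.1 (hcoord i t ht)).2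
  have hmC : ∀ t ∈ Set.Icc (0:ℝ) T, -C ≤ minf d v k t := fun t ht =>
    le_ciInf fun i => (abs_le.1 (hcoord i t ht)).1
  set L : ℝ := κ * (2*C) ^ α with hLdef
  have hL0 : 0 ≤ L := mul_nonneg hκ.le (Real.rpow_nonneg (by linarith) α)
  have hIoosub : Set.Ioo (0:ℝ) T ⊆ Set.Icc 0 T := Set.Ioo_subset_Icc_self
  -- derivative of components
  have hdk : ∀ i, ∀ s ∈ Set.Ioo (0:ℝ) T,
      HasDerivAt (fun τ => v i τ k) ((icsRHS d κ α m ψ x v i s) k) s := by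
    intro i s hs
    have h := (hsol.2.2.2 i s hs).2.2
    have := (EuclideanSpace.proj (𝕜 := ℝ) k).hasFDerivAt.comp_hasDerivAt s h
    exact this
  have hck : ∀ i, ContinuousOn (fun τ => v i τ k) (Set.Icc (0:ℝ) T) := fun i =>
    (EuclideanSpace.proj (𝕜 := ℝ) k).continuous.comp_continuousOn (hsol.2.2.1 i)
  -- key signed bounds on the k-th component of the RHS
  have key : ∀ i, ∀ s ∈ Set.Ioo (0:ℝ) T,
      (icsRHS d κ α m ψ x v i s) k ≤ κ * (Msup d v k s - v i s k) ^ α ∧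
      -(κ * (v i s k - minf d v k s) ^ α) ≤ (icsRHS d κ α m ψ x v i s) k := by
    intro i s hs
    have hsI : s ∈ Set.Icc (0:ℝ) T := hIoosub hs
    obtain ⟨-, hsum, -⟩ := hsol.2.2.2 i s hs
    have hψle1 : ∀ j, ψ ‖x j s - x i s‖ ≤ 1 := fun j =>
      hψ0 ▸ hψanti Set.self_mem_Ici (norm_nonneg _) (norm_nonneg _)
    have hψge0 : ∀ j, 0 ≤ ψ ‖x j s - x i s‖ := fun j => hψnn _ (norm_nonneg _)
    have hsum' : Summable (fun j => (m j * ψ ‖x j s - x i s‖) • Gam d α (v j s - v i s)) :=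
      hsum.of_norm
    have h1 : (∑' j, (m j * ψ ‖x j s - x i s‖) • Gam d α (v j s - v i s)) k
        = ∑' j, (m j * ψ ‖x j s - x i s‖) *
            (Real.sign (v j s k - v i s k) * |v j s k - v i s k| ^ α) := by
      have hmap := (EuclideanSpace.proj (𝕜 := ℝ) k).map_tsum hsum'
      simpa [Gam, PiLp.sub_apply] using hmap
    have hRHSk : (icsRHS d κ α m ψ x v i s) k
        = κ * ∑' j, (m j * ψ ‖x j s - x i s‖) *
            (Real.sign (v j s k - v i s k) * |v j s k - v i s k| ^ α) := by
      show (κ • (∑' j, (m j * ψ ‖x j s - x i s‖) • Gam d α (v j s - v i s))) k = _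
      rw [PiLp.smul_apply, smul_eq_mul, h1]
    have hsumL : Summable (fun j => (m j * ψ ‖x j s - x i s‖) *
        (Real.sign (v j s k - v i s k) * |v j s k - v i s k| ^ α)) := by
      apply Summable.of_norm_bounded hsum
      intro j
      rw [Real.norm_eq_abs]
      calc |(m j * ψ ‖x j s - x i s‖) *
            (Real.sign (v j s k - v i s k) * |v j s k - v i s k| ^ α)|
          = |((m j * ψ ‖x j s - x i s‖) • Gam d α (v j s - v i s)) k| := by
            simp [Gam, PiLp.sub_apply]
        _ ≤ ‖(m j * ψ ‖x j s - x i s‖) • Gam d α (v j s - v i s)‖ := abs_coord_le _ _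
    constructor
    · rw [hRHSk]
      have hb0 : 0 ≤ Msup d v k s - v i s k := sub_nonneg.2 (hleM s hsI i)
      have hterm : ∀ j, (m j * ψ ‖x j s - x i s‖) *
          (Real.sign (v j s k - v i s k) * |v j s k - v i s k| ^ α)
            ≤ m j * (Msup d v k s - v i s k) ^ α := by
        intro j
        rw [mul_assoc]
        refine mul_le_mul_of_nonneg_left ?_ (hm0 j)
        refine weight_mul_le (hψge0 j) (hψle1 j) ?_ (Real.rpow_nonneg hb0 α)
        exact sign_abs_rpow_le hα0.le (by linarith [hleM s hsI j]) hb0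
      calc κ * ∑' j, (m j * ψ ‖x j s - x i s‖) *
            (Real.sign (v j s k - v i s k) * |v j s k - v i s k| ^ α)
          ≤ κ * ∑' j, m j * (Msup d v k s - v i s k) ^ α :=
            mul_le_mul_of_nonneg_left (Summable.tsum_le_tsum hterm hsumL (hmS.mul_right _)) hκ.le
        _ = κ * (Msup d v k s - v i s k) ^ α := by rw [tsum_mul_right, hm1, one_mul]
    · rw [hRHSk]
      have hb0 : 0 ≤ v i s k - minf d v k s := sub_nonneg.2 (hmle s hsI i)
      have hterm : ∀ j, -(m j * (v i s k - minf d v k s) ^ α)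
          ≤ (m j * ψ ‖x j s - x i s‖) *
            (Real.sign (v j s k - v i s k) * |v j s k - v i s k| ^ α) := by
        intro j
        rw [mul_assoc]
        have h2 : ψ ‖x j s - x i s‖ *
            (-(Real.sign (v j s k - v i s k) * |v j s k - v i s k| ^ α))
              ≤ (v i s k - minf d v k s) ^ α := by
          refine weight_mul_le (hψge0 j) (hψle1 j) ?_ (Real.rpow_nonneg hb0 α)
          have := neg_rpow_le_sign_abs (w := v j s k - v i s k)
            (b := v i s k - minf d v k s) hα0.le (by linarith [hmle s hsI j]) hb0
          linarith
        have h3 : -((v i s k - minf d v k s) ^ α)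
            ≤ ψ ‖x j s - x i s‖ *
              (Real.sign (v j s k - v i s k) * |v j s k - v i s k| ^ α) := by
          nlinarith [h2]
        nlinarith [mul_le_mul_of_nonneg_left h3 (hm0 j)]
      have hS2 : Summable (fun j => -(m j * (v i s k - minf d v k s) ^ α)) :=
        (hmS.mul_right _).neg
      calc -(κ * (v i s k - minf d v k s) ^ α)
          = κ * ∑' j, -(m j * (v i s k - minf d v k s) ^ α) := by
            rw [tsum_neg, tsum_mul_right, hm1, one_mul]; ring
        _ ≤ κ * ∑' j, (m j * ψ ‖x j s - x i s‖) *
              (Real.sign (v j s k - v i s k) * |v j s k - v i s k| ^ α) :=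
            mul_le_mul_of_nonneg_left (Summable.tsum_le_tsum hterm hS2 hsumL) hκ.le
  -- uniform derivative bound ⇒ Lipschitz components
  have hub2 : ∀ i, ∀ s ∈ Set.Ioo (0:ℝ) T,
      (icsRHS d κ α m ψ x v i s) k ≤ L ∧ -L ≤ (icsRHS d κ α m ψ x v i s) k := by
    intro i s hs
    have hsI := hIoosub hs
    obtain ⟨h1, h2⟩ := key i s hs
    have hc1 := hMC s hsI
    have hc2 := (abs_le.1 (hcoord i s hsI)).1
    have hc3 := (abs_le.1 (hcoord i s hsI)).2
    have hc4 := hmC s hsI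
    constructor
    · refine h1.trans (mul_le_mul_of_nonneg_left
        (Real.rpow_le_rpow (sub_nonneg.2 (hleM s hsI i)) (by linarith) hα0.le) hκ.le)
    · refine le_trans ?_ h2
      have := mul_le_mul_of_nonneg_left
        (Real.rpow_le_rpow (y := 2*C) (sub_nonneg.2 (hmle s hsI i)) (by linarith) hα0.le) hκ.le
      linarith
  have hLip : ∀ i, ∀ a ∈ Set.Icc (0:ℝ) T, ∀ b ∈ Set.Icc (0:ℝ) T, a ≤ b →
      |v i b k - v i a k| ≤ L * (b - a) := by
    intro i a ha b hb hab
    have hIccsub : Set.Icc a b ⊆ Set.Icc (0:ℝ) T := Set.Icc_subset_Icc ha.1 hb.2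
    have hIoo : Set.Ioo a b ⊆ Set.Ioo (0:ℝ) T := fun s hs =>
      ⟨lt_of_le_of_lt ha.1 hs.1, lt_of_lt_of_le hs.2 hb.2⟩
    have h1 : v i b k - v i a k ≤ L * (b - a) :=
      deriv_le_bound hab ((hck i).mono hIccsub)
        (fun s hs => ⟨_, hdk i s (hIoo hs), (hub2 i s (hIoo hs)).1⟩)
    have h2 : (-(v i b k)) - (-(v i a k)) ≤ L * (b - a) := by
      refine deriv_le_bound hab ((hck i).mono hIccsub).neg ?_
      intro s hs
      exact ⟨_, (hdk i s (hIoo hs)).neg, by linarith [(hub2 i s (hIoo hs)).2]⟩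
    exact abs_le.2 ⟨by linarith, by linarith⟩
  have hMlip : ∀ s ∈ Set.Icc (0:ℝ) T, ∀ t' ∈ Set.Icc (0:ℝ) T, s ≤ t' →
      Msup d v k s ≤ Msup d v k t' + L * (t' - s) := by
    intro s hsI t' ht'I hst
    refine ciSup_le fun i => ?_
    have h1 := (abs_le.1 (hLip i s hsI t' ht'I hst)).1
    have h2 := hleM t' ht'I i
    linarith
  have hmlip : ∀ s ∈ Set.Icc (0:ℝ) T, ∀ t' ∈ Set.Icc (0:ℝ) T, s ≤ t' →
      minf d v k t' - L * (t' - s) ≤ minf d v k s := by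
    intro s hsI t' ht'I hst
    refine le_ciInf fun i => ?_
    have h1 := (abs_le.1 (hLip i s hsI t' ht'I hst)).2
    have h2 := hmle t' ht'I i
    linarith
  -- main one-step estimate
  have main : ∀ t ∈ Set.Icc (0:ℝ) T, ∀ t' ∈ Set.Icc (0:ℝ) T, t ≤ t' →
      Dv d v k t' ≤ Dv d v k t + 2*κ*(2*L*(t'-t)) ^ α * (t'-t) := by
    intro t ht t' ht' htt
    have hstep : ∀ ε : ℝ, 0 < ε →
        Dv d v k t' ≤ Dv d v k t + 2*ε + 2*κ*(ε + 2*L*(t'-t)) ^ α * (t'-t) := by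
      intro ε hε
      have h1 : Msup d v k t' - ε < ⨆ i, v i t' k := by
        have : (⨆ i, v i t' k) = Msup d v k t' := rfl
        rw [this]; linarith
      obtain ⟨i, hi⟩ := exists_lt_of_lt_ciSup h1
      have h2 : (⨅ j, v j t' k) < minf d v k t' + ε := by
        have : (⨅ j, v j t' k) = minf d v k t' := rfl
        rw [this]; linarith
      obtain ⟨j, hj⟩ := exists_lt_of_ciInf_lt h2
      have hb0 : (0:ℝ) ≤ ε + 2*L*(t'-t) := by
        have := mul_nonneg (mul_nonneg (by norm_num : (0:ℝ) ≤ 2) hL0) (by linarith : 0 ≤ t'-t)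
        linarith
      have hIoo : Set.Ioo t t' ⊆ Set.Ioo (0:ℝ) T := fun s hs =>
        ⟨lt_of_le_of_lt ht.1 hs.1, lt_of_lt_of_le hs.2 ht'.2⟩
      have hIcc : Set.Icc t t' ⊆ Set.Icc (0:ℝ) T := Set.Icc_subset_Icc ht.1 ht'.2
      have hder : ∀ s ∈ Set.Ioo t t', ∃ f',
          HasDerivAt (fun τ => v i τ k - v j τ k) f' s ∧
          f' ≤ 2*κ*(ε + 2*L*(t'-t)) ^ α := by
        intro s hs
        have hs' := hIoo hs
        have hsI := hIoosub hs'
        refine ⟨_, (hdk i s hs').sub (hdk j s hs'), ?_⟩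
        have hki := (key i s hs').1
        have hkj := (key j s hs').2
        have hts : t' - s ≤ t' - t := by linarith [hs.1]
        have hL' : L * (t'-s) ≤ L * (t'-t) := mul_le_mul_of_nonneg_left hts hL0
        have e1 := hMlip s hsI t' ht' hs.2.le
        have e2 := (abs_le.1 (hLip i s hsI t' ht' hs.2.le)).2
        have e3 : Msup d v k s - v i s k ≤ ε + 2*L*(t'-t) := by linarith
        have e3' : 0 ≤ Msup d v k s - v i s k := sub_nonneg.2 (hleM s hsI i)
        have r1 : (Msup d v k s - v i s k) ^ α ≤ (ε + 2*L*(t'-t)) ^ α :=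
          Real.rpow_le_rpow e3' e3 hα0.le
        have f1 := hmlip s hsI t' ht' hs.2.le
        have f2 := (abs_le.1 (hLip j s hsI t' ht' hs.2.le)).1
        have f3 : v j s k - minf d v k s ≤ ε + 2*L*(t'-t) := by linarith
        have f3' : 0 ≤ v j s k - minf d v k s := sub_nonneg.2 (hmle s hsI j)
        have r2 : (v j s k - minf d v k s) ^ α ≤ (ε + 2*L*(t'-t)) ^ α :=
          Real.rpow_le_rpow f3' f3 hα0.le
        have q1 := mul_le_mul_of_nonneg_left r1 hκ.le
        have q2 := mul_le_mul_of_nonneg_left r2 hκ.le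
        linarith
      have hgd := deriv_le_bound (f := fun τ => v i τ k - v j τ k) htt
        (((hck i).mono hIcc).sub ((hck j).mono hIcc)) hder
      have hvi := hleM t ht i
      have hvj := hmle t ht j
      simp only [Dv] at *
      linarith
    have c3 : ContinuousAt (fun ε : ℝ => (ε + 2*L*(t'-t)) ^ α) 0 := by
      have hf : ContinuousAt (fun ε : ℝ => ε + 2*L*(t'-t)) 0 :=
        (continuous_id.add continuous_const).continuousAt
      exact ContinuousAt.comp (g := fun y : ℝ => y ^ α)
        (Real.continuousAt_rpow_const (0 + 2*L*(t'-t)) α (Or.inr hα0.le)) hf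
    have c4 : ContinuousAt
        (fun ε : ℝ => Dv d v k t + 2*ε + 2*κ*(ε + 2*L*(t'-t)) ^ α * (t'-t)) 0 :=
      ((continuousAt_const.add ((continuous_const.mul continuous_id).continuousAt)).add
        ((continuousAt_const.mul c3).mul continuousAt_const))
    have hT2 : Tendsto (fun ε : ℝ => Dv d v k t + 2*ε + 2*κ*(ε + 2*L*(t'-t)) ^ α * (t'-t))
        (𝓝[>] (0:ℝ)) (𝓝 (Dv d v k t + 2*0 + 2*κ*(0 + 2*L*(t'-t)) ^ α * (t'-t))) :=
      c4.tendsto.mono_left nhdsWithin_le_nhds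
    have hfin := ge_of_tendsto hT2
      (eventually_nhdsWithin_of_forall (fun ε hε => hstep ε hε))
    simpa using hfin
  refine ⟨?_, ?_⟩
  · intro t1 ht1 t2 ht2 h12
    have hbound : ∀ n : ℕ,
        Dv d v k t2 - Dv d v k t1 ≤ 2*κ*(2*L*((t2-t1)/((n:ℝ)+1))) ^ α * (t2 - t1) := by
      intro n
      set δ : ℝ := (t2 - t1) / ((n:ℝ)+1) with hδdef
      have hN0 : (0:ℝ) < (n:ℝ)+1 := by positivity
      have hδ0 : 0 ≤ δ := div_nonneg (by linarith) hN0.le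
      set u : ℕ → ℝ := fun i => t1 + (i:ℝ) * δ with hudef
      have hu0 : u 0 = t1 := by simp [hudef]
      have hNδ : ((n:ℝ)+1) * δ = t2 - t1 := by
        rw [hδdef]; field_simp
      have huN : u (n+1) = t2 := by
        simp only [hudef]; push_cast; linarith [hNδ]
      have hustep : ∀ i : ℕ, u (i+1) - u i = δ := by
        intro i; simp only [hudef]; push_cast; ring
      have humem : ∀ i : ℕ, i ≤ n+1 → u i ∈ Set.Icc (0:ℝ) T := by
        intro i hi
        constructor
        · have : 0 ≤ (i:ℝ) * δ := mul_nonneg (Nat.cast_nonneg i) hδ0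
          simp only [hudef]; linarith [ht1.1]
        · have h1 : (i:ℝ) * δ ≤ ((n:ℝ)+1) * δ := by
            have : (i:ℝ) ≤ (n:ℝ)+1 := by exact_mod_cast hi
            exact mul_le_mul_of_nonneg_right this hδ0
          simp only [hudef]; linarith [ht2.2]
      have hmono : ∀ i : ℕ, i < n+1 →
          Dv d v k (u (i+1)) - Dv d v k (u i) ≤ 2*κ*(2*L*δ) ^ α * δ := by
        intro i hi
        have hord : u i ≤ u (i+1) := by
          have := hustep i; linarith [hδ0]
        have h1 := main (u i) (humem i hi.le) (u (i+1)) (humem (i+1) hi) hord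
        rw [hustep i] at h1
        linarith
      have htel := Finset.sum_range_sub (fun i => Dv d v k (u i)) (n+1)
      calc Dv d v k t2 - Dv d v k t1
          = ∑ i ∈ Finset.range (n+1), (Dv d v k (u (i+1)) - Dv d v k (u i)) := by
            rw [htel, hu0, huN]
        _ ≤ ∑ i ∈ Finset.range (n+1), 2*κ*(2*L*δ) ^ α * δ :=
            Finset.sum_le_sum (fun i hi => hmono i (Finset.mem_range.1 hi))
        _ = ((n:ℝ)+1) * (2*κ*(2*L*δ) ^ α * δ) := by
            rw [Finset.sum_const, Finset.card_range, nsmul_eq_mul]; push_cast; ring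
        _ = 2*κ*(2*L*δ) ^ α * (((n:ℝ)+1) * δ) := by ring
        _ = 2*κ*(2*L*δ) ^ α * (t2 - t1) := by rw [hNδ]
    have hδtend : Tendsto (fun n : ℕ => (t2-t1)/((n:ℝ)+1)) atTop (𝓝 0) := by
      have h := tendsto_one_div_add_atTop_nhds_zero_nat.const_mul (t2 - t1)
      simp only [mul_zero] at h
      refine h.congr fun n => ?_
      rw [mul_one_div]
    have hcont : ContinuousAt (fun y : ℝ => 2*κ*(2*L*y) ^ α * (t2-t1)) 0 := by
      have hf : ContinuousAt (fun y : ℝ => 2*L*y) (0:ℝ) :=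
        (continuous_const.mul continuous_id).continuousAt
      have c2 : ContinuousAt (fun y : ℝ => (2*L*y) ^ α) 0 :=
        ContinuousAt.comp (g := fun y : ℝ => y ^ α)
          (Real.continuousAt_rpow_const (2*L*0) α (Or.inr hα0.le)) hf
      exact (continuousAt_const.mul c2).mul continuousAt_const
    have htend := hcont.tendsto.comp hδtend
    have hval : 2*κ*(2*L*(0:ℝ)) ^ α * (t2-t1) = 0 := by
      rw [mul_zero, Real.zero_rpow hα0.ne']; ring
    rw [hval] at htend
    have hle : Dv d v k t2 - Dv d v k t1 ≤ 0 :=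
      ge_of_tendsto htend (Eventually.of_forall (fun n => by
        simpa [Function.comp] using hbound n))
    linarith
  · intro t ht
    have hbdd2 : BddAbove (Set.range fun p : ℕ × ℕ => |v p.1 t k - v p.2 t k|) := by
      refine ⟨2*C, ?_⟩
      rintro _ ⟨p, rfl⟩
      have h1 := abs_le.1 (hcoord p.1 t ht)
      have h2 := abs_le.1 (hcoord p.2 t ht)
      exact abs_le.2 ⟨by linarith [h1.1, h2.2], by linarith [h1.2, h2.1]⟩
    apply le_antisymm
    · simp only [Dv, Msup, minf]
      rw [sub_le_iff_le_add]
      refine ciSup_le fun i => ?_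
      have h3 : v i t k - (⨆ p : ℕ × ℕ, |v p.1 t k - v p.2 t k|) ≤ ⨅ j, v j t k := by
        refine le_ciInf fun j => ?_
        have h1 : |v i t k - v j t k| ≤ ⨆ p : ℕ × ℕ, |v p.1 t k - v p.2 t k| :=
          le_ciSup hbdd2 (i, j)
        have h2 : v i t k - v j t k ≤ |v i t k - v j t k| := le_abs_self _
        linarith
      linarith
    · refine ciSup_le fun p => ?_
      simp only [Dv]
      have h1 := hleM t ht p.1
      have h2 := hleM t ht p.2
      have h3 := hmle t ht p.1
      have h4 := hmle t ht p.2
      exact abs_le.2 ⟨by linarith, by linarith⟩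
end
end

section
/- Dini derivative estimates for the extremal velocities: let (x, v) be a solution of the ICS system on [0,∞) with sup_i(‖x_i(0)‖ + ‖v_i(0)‖) < ∞, and suppose ψ̲ : [0,∞) → [0,∞) is a continuous function such that inf_{i,j∈ℕ} ψ(‖x_j(t) − x_i(t)‖) ≥ ψ̲(t) for all t ≥ 0. Then for each k ∈ {1,…,d} and all t > 0: D⁺M^(k)(t) ≤ −κ ψ̲(t) ∑_{j=1}^∞ m_j |M^(k)(t) − v_j^k(t)|^α and D⁻m^(k)(t) ≥ κ ψ̲(t) ∑_{j=1}^∞ m_j |v_j^k(t) − m^(k)(t)|^α. -/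
open Filter MeasureTheory
open scoped Topology

noncomputable section

set_option maxHeartbeats 4000000

-- subadditivity
lemma rpow_subadd {α a b : ℝ} (hα0 : 0 ≤ α) (hα1 : α ≤ 1) (ha : 0 ≤ a) (hb : 0 ≤ b) :
    (a + b) ^ α ≤ a ^ α + b ^ α := by
  have h := NNReal.rpow_add_le_add_rpow a.toNNReal b.toNNReal hα0 hα1
  have h2 := NNReal.coe_le_coe.mpr h
  rw [← Real.toNNReal_add ha hb, NNReal.coe_add, NNReal.coe_rpow, NNReal.coe_rpow,
    NNReal.coe_rpow, Real.coe_toNNReal _ ha, Real.coe_toNNReal _ hb,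
    Real.coe_toNNReal _ (by linarith)] at h2
  exact h2

lemma real_iSup_neg (f : ℕ → ℝ) : ⨆ i, -f i = -⨅ i, f i := by
  have h : Set.range (fun i => -f i) = -(Set.range f) := by
    ext y
    simp only [Set.mem_range, Set.mem_neg]
    constructor
    · rintro ⟨i, hi⟩; exact ⟨i, by linarith⟩
    · rintro ⟨i, hi⟩; exact ⟨i, by linarith⟩
  rw [iSup, iInf, h, Real.sInf_def, neg_neg]

lemma real_limsup_neg (f : ℝ → ℝ) (l : Filter ℝ) :
    limsup (fun x => -f x) l = -liminf f l := by
  rw [Filter.limsup_eq, Filter.liminf_eq, Real.sInf_def]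
  congr 2
  ext a
  simp only [Set.mem_neg, Set.mem_setOf_eq, neg_le_neg_iff]

lemma coord_le_norm {d : ℕ} (y : EuclideanSpace ℝ (Fin d)) (k : Fin d) : |y k| ≤ ‖y‖ := by
  rw [EuclideanSpace.norm_eq]
  rw [← Real.sqrt_sq_eq_abs]
  apply Real.sqrt_le_sqrt
  calc (y k)^2 = ‖y k‖^2 := by rw [Real.norm_eq_abs, sq_abs]
  _ ≤ ∑ i, ‖y i‖^2 :=
    Finset.single_le_sum (f := fun i => ‖y i‖^2) (fun i _ => sq_nonneg _) (Finset.mem_univ k)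

lemma sub_le_of_deriv_le {f w : ℝ → ℝ} {a b K : ℝ} (hab : a ≤ b)
    (hc : ContinuousOn f (Set.Icc a b))
    (hd : ∀ s ∈ Set.Ioo a b, HasDerivAt f (w s) s)
    (hK : ∀ s ∈ Set.Ioo a b, w s ≤ K) :
    f b - f a ≤ K * (b - a) := by
  have h1 : AntitoneOn (fun s => f s - K * s) (Set.Icc a b) := by
    apply antitoneOn_of_deriv_nonpos (convex_Icc a b)
    · exact hc.sub ((continuous_const.mul continuous_id).continuousOn)
    · intro s hs
      rw [interior_Icc] at hs
      have hK' : HasDerivAt (fun x : ℝ => K * x) K s := by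
        simpa using (hasDerivAt_id s).const_mul K
      exact (((hd s hs).sub hK').differentiableAt).differentiableWithinAt
    · intro s hs
      rw [interior_Icc] at hs
      have hK' : HasDerivAt (fun x : ℝ => K * x) K s := by
        simpa using (hasDerivAt_id s).const_mul K
      have hder := ((hd s hs).sub hK').deriv
      rw [show (fun s => f s - K * s) = (f - fun x => K * x) from rfl, hder]
      have := hK s hs
      nlinarith
  have h2 := h1 (Set.left_mem_Icc.mpr hab) (Set.right_mem_Icc.mpr hab) hab
  simp only at h2
  nlinarith

lemma abs_sub_le_of_deriv_bound {f w : ℝ → ℝ} {a b L : ℝ} (hab : a ≤ b)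
    (hc : ContinuousOn f (Set.Icc a b))
    (hd : ∀ s ∈ Set.Ioo a b, HasDerivAt f (w s) s)
    (hL : ∀ s ∈ Set.Ioo a b, |w s| ≤ L) :
    |f b - f a| ≤ L * (b - a) := by
  rw [abs_le]
  constructor
  · have h0 := sub_le_of_deriv_le (f := fun s => -f s) (w := fun s => -w s) (K := L) hab hc.neg
      (fun s hs => (hd s hs).neg) (fun s hs => by
        have h := abs_le.mp (hL s hs)
        show -w s ≤ L
        linarith [h.1])
    have h2 : -f b - -f a ≤ L * (b - a) := h0
    linarith
  · exact sub_le_of_deriv_le hab hc hd (fun s hs => (abs_le.mp (hL s hs)).2)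

lemma sign_term_bound {α : ℝ} (hα0 : 0 < α) {y c p q : ℝ} (hc : 0 ≤ c) (hyc : y ≤ c)
    (hpq : p ≤ q) (hq1 : q ≤ 1) (hp0 : 0 ≤ p) :
    q * (Real.sign y * |y| ^ α) ≤ c ^ α - p * (max (-y) 0) ^ α := by
  rcases lt_trichotomy y 0 with hy | hy | hy
  · rw [Real.sign_of_neg hy, abs_of_neg hy, max_eq_left (by linarith : (0:ℝ) ≤ -y)]
    have h1 : 0 ≤ (-y) ^ α := Real.rpow_nonneg (by linarith) _
    have h2 : p * (-y) ^ α ≤ q * (-y) ^ α := mul_le_mul_of_nonneg_right hpq h1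
    have h3 : 0 ≤ c ^ α := Real.rpow_nonneg hc _
    nlinarith
  · subst hy
    simp only [Real.sign_zero, zero_mul, mul_zero, neg_zero, max_self,
      Real.zero_rpow hα0.ne', mul_zero, sub_zero]
    exact Real.rpow_nonneg hc _
  · rw [Real.sign_of_pos hy, abs_of_pos hy, max_eq_right (by linarith : -y ≤ (0:ℝ)),
      Real.zero_rpow hα0.ne']
    have h1 : y ^ α ≤ c ^ α := Real.rpow_le_rpow hy.le hyc hα0.le
    have h2 : 0 ≤ y ^ α := Real.rpow_nonneg hy.le _
    nlinarith

lemma abs_sign_rpow_le {α : ℝ} (y c : ℝ) (hc : 0 ≤ c) (hyc : |y| ≤ c) (hα0 : 0 < α) :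
    |Real.sign y * |y| ^ α| ≤ c ^ α := by
  rcases lt_trichotomy y 0 with hy | hy | hy
  · rw [Real.sign_of_neg hy, neg_mul, one_mul, abs_neg, abs_of_nonneg (Real.rpow_nonneg (abs_nonneg y) _)]
    exact Real.rpow_le_rpow (abs_nonneg y) hyc hα0.le
  · subst hy; simp [Real.sign_zero, Real.zero_rpow hα0.ne', Real.rpow_nonneg hc]
  · rw [Real.sign_of_pos hy, one_mul, abs_of_nonneg (Real.rpow_nonneg (abs_nonneg y) _)]
    exact Real.rpow_le_rpow (abs_nonneg y) hyc hα0.le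


lemma core (κ α : ℝ) (hκ : 0 < κ) (hα0 : 0 < α) (hα1 : α < 1)
    (m : ℕ → ℝ) (hm0 : ∀ j, 0 ≤ m j) (hmS : Summable m) (hm1 : ∑' j, m j = 1)
    (u : ℕ → ℝ → ℝ) (φ : ℕ → ℕ → ℝ → ℝ) (ψu : ℝ → ℝ) (t B : ℝ) (ht : 0 < t)
    (hB : ∀ i, ∀ s ∈ Set.Icc t (t+1), |u i s| ≤ B)
    (hφ1 : ∀ i j, ∀ s ∈ Set.Icc t (t+1), φ i j s ≤ 1)
    (hφl : ∀ i j, ∀ s ∈ Set.Icc t (t+1), ψu s ≤ φ i j s)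
    (hψu0 : ∀ s ∈ Set.Icc t (t+1), 0 ≤ ψu s)
    (hψuc : ContinuousWithinAt ψu (Set.Icc t (t+1)) t)
    (hderiv : ∀ i, ∀ s ∈ Set.Icc t (t+1), HasDerivAt (u i)
      (κ * ∑' j, (m j * φ i j s) * (Real.sign (u j s - u i s) * |u j s - u i s| ^ α)) s) :
    diniUR (fun s => ⨆ i, u i s) t ≤ -(κ * ψu t * ∑' j, m j * |(⨆ i, u i t) - u j t| ^ α) := by
  have htI : t ∈ Set.Icc t (t+1) := ⟨le_refl t, by linarith⟩
  have hB0 : 0 ≤ B := le_trans (abs_nonneg _) (hB 0 t htI)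
  have hψu1 : ∀ s ∈ Set.Icc t (t+1), ψu s ≤ 1 := fun s hs => le_trans (hφl 0 0 s hs) (hφ1 0 0 s hs)
  have hφ0 : ∀ i j, ∀ s ∈ Set.Icc t (t+1), 0 ≤ φ i j s :=
    fun i j s hs => le_trans (hψu0 s hs) (hφl i j s hs)
  have hbdd : ∀ s ∈ Set.Icc t (t+1), BddAbove (Set.range fun i => u i s) := fun s hs =>
    ⟨B, by rintro _ ⟨i, rfl⟩; exact (abs_le.mp (hB i s hs)).2⟩
  set M : ℝ → ℝ := fun s => ⨆ i, u i s with hMdef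
  have huM : ∀ j, ∀ s ∈ Set.Icc t (t+1), u j s ≤ M s := fun j s hs => le_ciSup (hbdd s hs) j
  have hMB : ∀ s ∈ Set.Icc t (t+1), M s ≤ B := fun s hs => ciSup_le fun i => (abs_le.mp (hB i s hs)).2
  have h2B : (0:ℝ) ≤ (2*B)^α := Real.rpow_nonneg (by linarith) _
  have habs_term : ∀ i j, ∀ s ∈ Set.Icc t (t+1),
      |(m j * φ i j s) * (Real.sign (u j s - u i s) * |u j s - u i s| ^ α)| ≤ m j * (2*B)^α := by
    intro i j s hs
    rw [abs_mul]
    have h1 : |m j * φ i j s| = m j * φ i j s :=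
      abs_of_nonneg (mul_nonneg (hm0 j) (hφ0 i j s hs))
    have h2 : |Real.sign (u j s - u i s) * |u j s - u i s| ^ α| ≤ (2*B)^α := by
      apply abs_sign_rpow_le _ _ (by linarith) _ hα0
      have ha := abs_le.mp (hB j s hs); have hb := abs_le.mp (hB i s hs)
      rw [abs_le]
      constructor <;> [linarith; linarith]
    have h3 : m j * φ i j s ≤ m j := by
      nlinarith [hφ1 i j s hs, hm0 j, hφ0 i j s hs]
    calc |m j * φ i j s| * |Real.sign (u j s - u i s) * |u j s - u i s| ^ α|
        ≤ (m j * φ i j s) * (2*B)^α := by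
          rw [h1]; exact mul_le_mul_of_nonneg_left h2 (mul_nonneg (hm0 j) (hφ0 i j s hs))
      _ ≤ m j * (2*B)^α := mul_le_mul_of_nonneg_right h3 h2B
  have hsum : ∀ i, ∀ s ∈ Set.Icc t (t+1),
      Summable (fun j => (m j * φ i j s) * (Real.sign (u j s - u i s) * |u j s - u i s| ^ α)) := by
    intro i s hs
    apply Summable.of_norm_bounded (g := fun j => m j * (2*B)^α) (hmS.mul_right _)
    intro j; rw [Real.norm_eq_abs]; exact habs_term i j s hs
  set L0 := κ * (2*B)^α with hL0def
  have hL00 : 0 ≤ L0 := mul_nonneg hκ.le h2B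
  have hwb : ∀ i, ∀ s ∈ Set.Icc t (t+1),
      |κ * ∑' j, (m j * φ i j s) * (Real.sign (u j s - u i s) * |u j s - u i s| ^ α)| ≤ L0 := by
    intro i s hs
    rw [abs_mul, abs_of_pos hκ, hL0def]
    apply mul_le_mul_of_nonneg_left _ hκ.le
    have hsabs : Summable (fun j => |(m j * φ i j s) * (Real.sign (u j s - u i s) * |u j s - u i s| ^ α)|) := by
      apply Summable.of_nonneg_of_le (fun j => abs_nonneg _) (fun j => habs_term i j s hs) (hmS.mul_right _)
    calc |∑' j, (m j * φ i j s) * (Real.sign (u j s - u i s) * |u j s - u i s| ^ α)|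
        ≤ ∑' j, |(m j * φ i j s) * (Real.sign (u j s - u i s) * |u j s - u i s| ^ α)| := by
          have hn := norm_tsum_le_tsum_norm
            (f := fun j => (m j * φ i j s) * (Real.sign (u j s - u i s) * |u j s - u i s| ^ α))
            (by simpa only [Real.norm_eq_abs] using hsabs)
          simpa only [Real.norm_eq_abs] using hn
      _ ≤ ∑' j, m j * (2*B)^α :=
          Summable.tsum_le_tsum (fun j => habs_term i j s hs) hsabs (hmS.mul_right _)
      _ = (2*B)^α := by rw [tsum_mul_right, hm1, one_mul]
  have hIsub : ∀ {a b : ℝ}, a ∈ Set.Icc t (t+1) → b ∈ Set.Icc t (t+1) →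
      Set.Icc a b ⊆ Set.Icc t (t+1) := by
    intro a b ha hb s hs; exact ⟨le_trans ha.1 hs.1, le_trans hs.2 hb.2⟩
  have hucont : ∀ i, ∀ a ∈ Set.Icc t (t+1), ∀ b ∈ Set.Icc t (t+1),
      ContinuousOn (u i) (Set.Icc a b) := by
    intro i a ha b hb s hs
    exact ((hderiv i s (hIsub ha hb hs)).continuousAt).continuousWithinAt
  have hulip : ∀ i, ∀ a ∈ Set.Icc t (t+1), ∀ b ∈ Set.Icc t (t+1), a ≤ b →
      |u i b - u i a| ≤ L0 * (b - a) := by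
    intro i a ha b hb hab
    exact abs_sub_le_of_deriv_bound hab (hucont i a ha b hb)
      (fun s hs => hderiv i s (hIsub ha hb (Set.mem_Icc_of_Ioo hs)))
      (fun s hs => hwb i s (hIsub ha hb (Set.mem_Icc_of_Ioo hs)))
  have hMlip1 : ∀ a ∈ Set.Icc t (t+1), ∀ b ∈ Set.Icc t (t+1), a ≤ b →
      M b ≤ M a + L0 * (b - a) := by
    intro a ha b hb hab
    apply ciSup_le
    intro i
    have h := (abs_le.mp (hulip i a ha b hb hab)).2
    linarith [huM i a ha]
  have hMlip2 : ∀ a ∈ Set.Icc t (t+1), ∀ b ∈ Set.Icc t (t+1), a ≤ b →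
      M a ≤ M b + L0 * (b - a) := by
    intro a ha b hb hab
    apply ciSup_le
    intro i
    have h := (abs_le.mp (hulip i a ha b hb hab)).1
    linarith [huM i b hb]
  have hbj0 : ∀ j, 0 ≤ M t - u j t := fun j => by linarith [huM j t htI]
  have habsb : ∀ j, |M t - u j t| ≤ 2*B := fun j => by
    rw [abs_of_nonneg (hbj0 j)]
    have := (abs_le.mp (hB j t htI)).1
    have := hMB t htI
    linarith
  have hSsum : Summable (fun j => m j * |M t - u j t| ^ α) := by
    apply Summable.of_nonneg_of_le
      (fun j => mul_nonneg (hm0 j) (Real.rpow_nonneg (abs_nonneg _) _))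
      (fun j => mul_le_mul_of_nonneg_left
        (Real.rpow_le_rpow (abs_nonneg _) (habsb j) hα0.le) (hm0 j))
      (hmS.mul_right _)
  set S := ∑' j, m j * |M t - u j t| ^ α with hSdef
  have hS0 : 0 ≤ S :=
    tsum_nonneg fun j => mul_nonneg (hm0 j) (Real.rpow_nonneg (abs_nonneg _) _)
  have hSB : S ≤ (2*B)^α := by
    rw [hSdef]
    calc (∑' j, m j * |M t - u j t| ^ α) ≤ ∑' j, m j * (2*B)^α :=
        Summable.tsum_le_tsum (fun j => mul_le_mul_of_nonneg_left
          (Real.rpow_le_rpow (abs_nonneg _) (habsb j) hα0.le) (hm0 j)) hSsum (hmS.mul_right _)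
      _ = (2*B)^α := by rw [tsum_mul_right, hm1, one_mul]
  set A := κ * ψu t * S with hAdef
  have hA0 : 0 ≤ A := mul_nonneg (mul_nonneg hκ.le (hψu0 t htI)) hS0
  -- KEY step
  have key : ∀ ε : ℝ, 0 < ε → ∃ h0 : ℝ, 0 < h0 ∧ h0 ≤ 1 ∧
      ∀ h : ℝ, 0 < h → h ≤ h0 → M (t+h) ≤ M t + h * (-A + ε) := by
    intro ε hε
    have hεψ : 0 < ε / (2 * (L0 + 1)) := by positivity
    obtain ⟨δ1, hδ1pos, hδ1⟩ := Metric.continuousWithinAt_iff.mp hψuc _ hεψ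
    have hrc : ContinuousAt (fun y : ℝ => y ^ α) 0 :=
      Real.continuousAt_rpow_const 0 α (Or.inr hα0.le)
    have hε' : 0 < ε / (2 * (2*κ + 1)) := by positivity
    obtain ⟨δ2, hδ2pos, hδ2⟩ := Metric.continuousAt_iff.mp hrc _ hε'
    have hALpos : (0:ℝ) < A + L0 + 1 := by linarith
    refine ⟨min (min (δ1/2) (δ2/(A + L0 + 1))) 1, ?_, min_le_right _ _, ?_⟩
    · exact lt_min (lt_min (by linarith) (by positivity)) one_pos
    intro h hh hhle
    have hh1 : h ≤ 1 := le_trans hhle (min_le_right _ _)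
    have hhδ1 : h < δ1 :=
      lt_of_le_of_lt (le_trans hhle (le_trans (min_le_left _ _) (min_le_left _ _))) (by linarith)
    have hhδ2 : (A + L0) * h < δ2 := by
      have h1 : h ≤ δ2/(A+L0+1) := le_trans hhle (le_trans (min_le_left _ _) (min_le_right _ _))
      have h2 : (A+L0) * h ≤ (A+L0) * (δ2/(A+L0+1)) := mul_le_mul_of_nonneg_left h1 (by linarith)
      have h3 : (A+L0) * (δ2/(A+L0+1)) < δ2 := by
        rw [mul_div_assoc', div_lt_iff₀ hALpos]
        nlinarith
      linarith
    have hthI : t + h ∈ Set.Icc t (t+1) := ⟨by linarith, by linarith⟩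
    have hIccsub : Set.Icc t (t+h) ⊆ Set.Icc t (t+1) := fun s hs => ⟨hs.1, by linarith [hs.2]⟩
    set c1 := (A + L0) * h with hc1def
    have hc10 : 0 ≤ c1 := mul_nonneg (by linarith) hh.le
    have hc1n : 0 ≤ c1 ^ α := Real.rpow_nonneg hc10 _
    have hc1ε : 2 * κ * c1 ^ α ≤ ε / 2 := by
      have hd := hδ2 (show dist c1 0 < δ2 by
        rw [Real.dist_eq, sub_zero, abs_of_nonneg hc10]; exact hhδ2)
      rw [Real.dist_eq, Real.zero_rpow hα0.ne', sub_zero,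
        abs_of_nonneg (Real.rpow_nonneg hc10 _)] at hd
      have h5 : 2*κ*(ε/(2*(2*κ+1))) ≤ ε/2 := by
        rw [mul_div_assoc', div_le_div_iff₀ (by positivity) (by norm_num : (0:ℝ) < 2)]
        nlinarith
      nlinarith [mul_le_mul_of_nonneg_left hd.le (show (0:ℝ) ≤ 2*κ by linarith)]
    have hψuA : ∀ s ∈ Set.Icc t (t+h), κ * |ψu s - ψu t| * S ≤ ε / 2 := by
      intro s hs
      have hsI : s ∈ Set.Icc t (t+1) := hIccsub hs
      have hdst : dist s t < δ1 := by
        rw [Real.dist_eq, abs_of_nonneg (by linarith [hs.1] : (0:ℝ) ≤ s - t)]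
        linarith [hs.2]
      have h6 := hδ1 hsI hdst
      rw [Real.dist_eq] at h6
      have h7 : κ * |ψu s - ψu t| * S ≤ κ * (ε/(2*(L0+1))) * (2*B)^α := by
        apply mul_le_mul (mul_le_mul_of_nonneg_left h6.le hκ.le) hSB hS0 (by positivity)
      have h8 : κ * (ε/(2*(L0+1))) * (2*B)^α = ε/(2*(L0+1)) * L0 := by rw [hL0def]; ring
      rw [h8] at h7
      have h9 : ε/(2*(L0+1)) * L0 ≤ ε/2 := by
        rw [div_mul_eq_mul_div, div_le_div_iff₀ (by positivity) (by norm_num : (0:ℝ) < 2)]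
        nlinarith
      linarith
    have hstep : ∀ i, u i (t+h) ≤ M t + h * (-A + ε) := by
      intro i
      set Q := {s : ℝ | s ∈ Set.Icc t (t+h) ∧ u i s ≤ M t - A * h} with hQdef
      have hQclosed : IsClosed Q := by
        have hQeq : Q = Set.Icc t (t+h) ∩ (u i) ⁻¹' (Set.Iic (M t - A*h)) := by
          ext s
          simp only [hQdef, Set.mem_setOf_eq, Set.mem_inter_iff, Set.mem_preimage, Set.mem_Iic]
        rw [hQeq]
        exact ContinuousOn.preimage_isClosed_of_isClosed
          (hucont i t htI (t+h) hthI) isClosed_Icc isClosed_Iic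
      have hEclosed : IsClosed (insert t Q) := by
        rw [Set.insert_eq]; exact isClosed_singleton.union hQclosed
      have hEne : (insert t Q).Nonempty := ⟨t, Set.mem_insert _ _⟩
      have hEbdd : BddAbove (insert t Q) := by
        refine ⟨t + h, ?_⟩
        rintro s hs
        rcases Set.mem_insert_iff.mp hs with rfl | hsQ
        · linarith
        · exact hsQ.1.2
      set τ := sSup (insert t Q) with hτdef
      have hτE : τ ∈ insert t Q := hEclosed.csSup_mem hEne hEbdd
      have hτ1 : t ≤ τ := le_csSup hEbdd (Set.mem_insert _ _)
      have hτ2 : τ ≤ t + h := by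
        apply csSup_le hEne
        rintro s hs
        rcases Set.mem_insert_iff.mp hs with rfl | hsQ
        · linarith
        · exact hsQ.1.2
      have hτI : τ ∈ Set.Icc t (t+1) := ⟨hτ1, by linarith⟩
      have hQgt : ∀ s, τ < s → s ≤ t + h → M t - A*h < u i s := by
        intro s hτs hsle
        by_contra hcon
        push_neg at hcon
        have hsQ : s ∈ Q := ⟨⟨by linarith, hsle⟩, hcon⟩
        have : s ≤ τ := le_csSup hEbdd (Set.mem_insert_of_mem _ hsQ)
        linarith
      have hwle : ∀ s ∈ Set.Ioo τ (t+h),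
          κ * ∑' j, (m j * φ i j s) * (Real.sign (u j s - u i s) * |u j s - u i s| ^ α) ≤ -A + ε := by
        intro s hs
        have hsIcc : s ∈ Set.Icc t (t+h) := ⟨by linarith [hs.1], hs.2.le⟩
        have hsI : s ∈ Set.Icc t (t+1) := hIccsub hsIcc
        have h1 : M t - A*h < u i s := hQgt s hs.1 hs.2.le
        have h2 : ∀ j, u j s ≤ u j t + L0 * h := by
          intro j
          have hl := (abs_le.mp (hulip j t htI s hsI hsIcc.1)).2
          nlinarith [hL00, hsIcc.2]
        have hMs : M s ≤ M t + L0 * h := by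
          have hl := hMlip1 t htI s hsI hsIcc.1
          nlinarith [hL00, hsIcc.2]
        have hterm : ∀ j, (m j * φ i j s) * (Real.sign (u j s - u i s) * |u j s - u i s| ^ α) ≤
            m j * c1^α - ψu s * (m j * (max (u i s - u j s) 0) ^ α) := by
          intro j
          have hy : u j s - u i s ≤ c1 := by
            have h3 := huM j s hsI
            rw [hc1def]; nlinarith
          have hb := sign_term_bound hα0 hc10 hy (hφl i j s hsI) (hφ1 i j s hsI) (hψu0 s hsI)
          rw [show -(u j s - u i s) = u i s - u j s by ring] at hb
          have hb2 := mul_le_mul_of_nonneg_left hb (hm0 j)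
          calc (m j * φ i j s) * (Real.sign (u j s - u i s) * |u j s - u i s| ^ α)
              = m j * (φ i j s * (Real.sign (u j s - u i s) * |u j s - u i s| ^ α)) := by ring
            _ ≤ m j * (c1^α - ψu s * (max (u i s - u j s) 0)^α) := hb2
            _ = m j * c1^α - ψu s * (m j * (max (u i s - u j s) 0)^α) := by ring
        have hP : ∀ j, (0:ℝ) ≤ (max (u i s - u j s) 0) ^ α :=
          fun j => Real.rpow_nonneg (le_max_right _ _) _
        have hPle : ∀ j, (max (u i s - u j s) 0) ^ α ≤ (2*B)^α := by
          intro j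
          apply Real.rpow_le_rpow (le_max_right _ _) _ hα0.le
          rw [max_le_iff]
          have ha := abs_le.mp (hB i s hsI); have hbj := abs_le.mp (hB j s hsI)
          constructor
          · linarith
          · linarith
        have hsumP : Summable (fun j => m j * (max (u i s - u j s) 0) ^ α) :=
          Summable.of_nonneg_of_le (fun j => mul_nonneg (hm0 j) (hP j))
            (fun j => mul_le_mul_of_nonneg_left (hPle j) (hm0 j)) (hmS.mul_right _)
        have hsumle : (∑' j, (m j * φ i j s) * (Real.sign (u j s - u i s) * |u j s - u i s| ^ α))
            ≤ c1^α - ψu s * ∑' j, m j * (max (u i s - u j s) 0) ^ α := by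
          calc (∑' j, (m j * φ i j s) * (Real.sign (u j s - u i s) * |u j s - u i s| ^ α))
              ≤ ∑' j, (m j * c1^α - ψu s * (m j * (max (u i s - u j s) 0) ^ α)) :=
                Summable.tsum_le_tsum hterm (hsum i s hsI) ((hmS.mul_right _).sub (hsumP.mul_left _))
            _ = (∑' j, m j * c1^α) - ∑' j, ψu s * (m j * (max (u i s - u j s) 0) ^ α) :=
                Summable.tsum_sub (hmS.mul_right _) (hsumP.mul_left _)
            _ = c1^α - ψu s * ∑' j, m j * (max (u i s - u j s) 0) ^ α := by
                rw [tsum_mul_right, hm1, one_mul, tsum_mul_left]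
        have hPlow : S - c1^α ≤ ∑' j, m j * (max (u i s - u j s) 0) ^ α := by
          have hterm2 : ∀ j, m j * |M t - u j t| ^ α - m j * c1^α ≤
              m j * (max (u i s - u j s) 0) ^ α := by
            intro j
            have hb1 : (M t - u j t) - c1 ≤ u i s - u j s := by
              have h3 := h2 j
              rw [hc1def]; nlinarith
            have hb2 : (max ((M t - u j t) - c1) 0) ^ α ≤ (max (u i s - u j s) 0) ^ α :=
              Real.rpow_le_rpow (le_max_right _ _) (max_le_max hb1 (le_refl 0)) hα0.le
            have hb4 : M t - u j t ≤ max ((M t - u j t) - c1) 0 + c1 := by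
              rcases le_total (M t - u j t) c1 with hle | hle
              · have := le_max_right ((M t - u j t) - c1) 0; linarith
              · have := le_max_left ((M t - u j t) - c1) 0; linarith
            have hb3 : |M t - u j t| ^ α ≤ (max ((M t - u j t) - c1) 0) ^ α + c1 ^ α := by
              rw [abs_of_nonneg (hbj0 j)]
              calc (M t - u j t) ^ α ≤ (max ((M t - u j t) - c1) 0 + c1) ^ α :=
                    Real.rpow_le_rpow (hbj0 j) hb4 hα0.le
                _ ≤ (max ((M t - u j t) - c1) 0) ^ α + c1 ^ α :=
                    rpow_subadd hα0.le hα1.le (le_max_right _ _) hc10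
            have hb5 : |M t - u j t| ^ α ≤ (max (u i s - u j s) 0) ^ α + c1 ^ α :=
              le_trans hb3 (by linarith)
            nlinarith [mul_le_mul_of_nonneg_left hb5 (hm0 j)]
          have hle := Summable.tsum_le_tsum hterm2 (hSsum.sub (hmS.mul_right _)) hsumP
          rw [Summable.tsum_sub hSsum (hmS.mul_right _), tsum_mul_right, hm1, one_mul] at hle
          rw [hSdef]
          exact hle
        have hψs0 := hψu0 s hsI
        have hψs1 := hψu1 s hsI
        have hψA := hψuA s hsIcc
        have hmulP : ψu s * (S - c1^α) ≤ ψu s * ∑' j, m j * (max (u i s - u j s) 0) ^ α :=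
          mul_le_mul_of_nonneg_left hPlow hψs0
        have hexp : ψu s * (S - c1^α) = ψu s * S - ψu s * c1^α := by ring
        have hwexp : κ * (∑' j, (m j * φ i j s) * (Real.sign (u j s - u i s) * |u j s - u i s| ^ α))
            ≤ κ * (c1^α + ψu s * c1^α - ψu s * S) := by
          apply mul_le_mul_of_nonneg_left _ hκ.le
          rw [hexp] at hmulP
          linarith [hsumle]
        have e1 : κ * (ψu s) * c1^α ≤ κ * c1^α := by
          nlinarith [mul_nonneg (mul_nonneg hκ.le (show (0:ℝ) ≤ 1 - ψu s by linarith)) hc1n]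
        have e2 : κ * (ψu t) * S - κ * (ψu s) * S ≤ κ * |ψu s - ψu t| * S := by
          have h10 : ψu t - ψu s ≤ |ψu s - ψu t| := by
            rw [abs_sub_comm]; exact le_abs_self _
          nlinarith [mul_le_mul_of_nonneg_right (mul_le_mul_of_nonneg_left h10 hκ.le) hS0]
        calc κ * (∑' j, (m j * φ i j s) * (Real.sign (u j s - u i s) * |u j s - u i s| ^ α))
            ≤ κ * (c1^α + ψu s * c1^α - ψu s * S) := hwexp
          _ = κ * c1^α + κ * (ψu s) * c1^α - κ * (ψu s) * S := by ring
          _ ≤ 2 * κ * c1^α - κ * (ψu t) * S + κ * |ψu s - ψu t| * S := by linarith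
          _ ≤ ε/2 - A + ε/2 := by rw [hAdef]; linarith
          _ = -A + ε := by ring
      have hMVT := sub_le_of_deriv_le (f := u i)
          (w := fun s => κ * ∑' j, (m j * φ i j s) * (Real.sign (u j s - u i s) * |u j s - u i s| ^ α))
          (K := -A + ε) hτ2
          ((hucont i t htI (t+h) hthI).mono (Set.Icc_subset_Icc_left hτ1))
          (fun s hs => hderiv i s (hIccsub ⟨by linarith [hs.1, hτ1], hs.2.le⟩))
          hwle
      rcases Set.mem_insert_iff.mp hτE with hτt | hτQ
      · rw [hτt] at hMVT
        have h11 := huM i t htI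
        nlinarith [hMVT]
      · have h10 : u i τ ≤ M t - A*h := hτQ.2
        nlinarith [mul_nonneg hA0 (show (0:ℝ) ≤ t + h - τ by linarith),
          mul_nonneg hε.le (show (0:ℝ) ≤ τ - t by linarith)]
    exact ciSup_le hstep
  -- conclude via limsup
  have hlow : ∀ᶠ h in 𝓝[>] (0:ℝ), -L0 ≤ (M (t+h) - M t)/h := by
    filter_upwards [Ioc_mem_nhdsGT (show (0:ℝ) < 1 by norm_num)] with h hh
    have hthI : t + h ∈ Set.Icc t (t+1) := ⟨by linarith [hh.1], by linarith [hh.2]⟩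
    have hl := hMlip2 t htI (t+h) hthI (by linarith [hh.1])
    rw [le_div_iff₀ hh.1]
    nlinarith [hl]
  have hcob : IsCoboundedUnder (· ≤ ·) (𝓝[>] (0:ℝ)) (fun h => (M (t+h) - M t)/h) :=
    isCoboundedUnder_le_of_eventually_le _ hlow
  have hfinal : ∀ ε : ℝ, 0 < ε → diniUR M t ≤ -A + ε := by
    intro ε hε
    obtain ⟨h0, hh0, _, hkey⟩ := key ε hε
    unfold diniUR
    apply Filter.limsup_le_of_le hcob
    filter_upwards [Ioc_mem_nhdsGT hh0] with h hh
    rw [div_le_iff₀ hh.1]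
    nlinarith [hkey h hh.1 hh.2]
  have hend := le_of_forall_pos_le_add (fun ε hε => hfinal ε hε)
  rw [hAdef, hSdef] at hend
  exact hend


lemma icsRHS_apply (d : ℕ) (κ α : ℝ) (m : ℕ → ℝ) (ψ : ℝ → ℝ)
    (x v : ℕ → ℝ → EuclideanSpace ℝ (Fin d)) (i : ℕ) (s : ℝ) (k : Fin d)
    (hsum : Summable (fun j => ‖(m j * ψ ‖x j s - x i s‖) • Gam d α (v j s - v i s)‖)) :
    icsRHS d κ α m ψ x v i s k =
      κ * ∑' j, (m j * ψ ‖x j s - x i s‖) *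
        (Real.sign (v j s k - v i s k) * |v j s k - v i s k| ^ α) := by
  have hsum' : Summable (fun j => (m j * ψ ‖x j s - x i s‖) • Gam d α (v j s - v i s)) :=
    Summable.of_norm hsum
  have h1 : icsRHS d κ α m ψ x v i s k =
      κ * ((∑' j, (m j * ψ ‖x j s - x i s‖) • Gam d α (v j s - v i s)) k) := rfl
  rw [h1]
  congr 1
  have h2 := (EuclideanSpace.proj (𝕜 := ℝ) k).map_tsum hsum'
  calc (∑' j, (m j * ψ ‖x j s - x i s‖) • Gam d α (v j s - v i s)) k
      = ∑' j, ((m j * ψ ‖x j s - x i s‖) • Gam d α (v j s - v i s)) k := h2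
    _ = _ := tsum_congr fun j => rfl

lemma component_deriv (d : ℕ) (κ α : ℝ) (m : ℕ → ℝ) (ψ : ℝ → ℝ)
    (x v : ℕ → ℝ → EuclideanSpace ℝ (Fin d)) (i : ℕ) (s : ℝ) (k : Fin d)
    (hsum : Summable (fun j => ‖(m j * ψ ‖x j s - x i s‖) • Gam d α (v j s - v i s)‖))
    (hd : HasDerivAt (v i) (icsRHS d κ α m ψ x v i s) s) :
    HasDerivAt (fun r => v i r k)
      (κ * ∑' j, (m j * ψ ‖x j s - x i s‖) *
        (Real.sign (v j s k - v i s k) * |v j s k - v i s k| ^ α)) s := by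
  have h := ((EuclideanSpace.proj (𝕜 := ℝ) k).hasFDerivAt).comp_hasDerivAt s hd
  rw [← icsRHS_apply d κ α m ψ x v i s k hsum]
  exact h


/-- Dini derivative estimates for the extremal velocities under a continuous
lower bound `ψ̲` on the communication weights. -/
theorem stmt8 (d : ℕ) (hd : 1 ≤ d) (κ : ℝ) (hκ : 0 < κ) (α : ℝ) (hα0 : 0 < α) (hα1 : α < 1)
    (m : ℕ → ℝ) (hm0 : ∀ j, 0 ≤ m j) (hmS : Summable m) (hm1 : ∑' j, m j = 1)
    (ψ : ℝ → ℝ) (hψLip : ∃ L : NNReal, LipschitzOnWith L ψ (Set.Ici 0))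
    (hψanti : AntitoneOn ψ (Set.Ici 0)) (hψ0 : ψ 0 = 1)
    (hψnn : ∀ r, 0 ≤ r → 0 ≤ ψ r)
    (x v : ℕ → ℝ → EuclideanSpace ℝ (Fin d))
    (hsol : IsICSSolOn d κ α m ψ x v (Set.Ici 0) (Set.Ioi 0))
    (hinit : ∃ C : ℝ, ∀ i, ‖x i 0‖ + ‖v i 0‖ ≤ C)
    (ψu : ℝ → ℝ) (hψucont : ContinuousOn ψu (Set.Ici 0))
    (hψunn : ∀ t, 0 ≤ t → 0 ≤ ψu t)
    (hψulb : ∀ t, 0 ≤ t → ∀ i j : ℕ, ψu t ≤ ψ ‖x j t - x i t‖)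
    (k : Fin d) :
    ∀ t : ℝ, 0 < t →
      diniUR (Msup d v k) t ≤ -(κ * ψu t * ∑' j, m j * |Msup d v k t - v j t k| ^ α) ∧
      κ * ψu t * ∑' j, m j * |v j t k - minf d v k t| ^ α ≤ diniLR (minf d v k) t := by
  obtain ⟨hcomp, hxc, hvc, hode⟩ := hsol
  intro t ht
  obtain ⟨C, hC⟩ := hcomp (Set.Icc 0 (t+1)) (fun s hs => hs.1) isCompact_Icc
  have hIsub : ∀ s ∈ Set.Icc t (t+1), s ∈ Set.Ioi (0:ℝ) := fun s hs => lt_of_lt_of_le ht hs.1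
  have hI0 : ∀ s ∈ Set.Icc t (t+1), s ∈ Set.Icc (0:ℝ) (t+1) :=
    fun s hs => ⟨(hIsub s hs).out.le, hs.2⟩
  have hvB : ∀ i, ∀ s ∈ Set.Icc t (t+1), |v i s k| ≤ C := by
    intro i s hs
    refine le_trans (coord_le_norm (v i s) k) ?_
    have := hC i s (hI0 s hs)
    linarith [norm_nonneg (x i s)]
  have hφ1 : ∀ (i j : ℕ), ∀ s ∈ Set.Icc t (t+1), ψ ‖x j s - x i s‖ ≤ 1 := by
    intro i j s hs
    rw [← hψ0]
    exact hψanti (Set.mem_Ici.mpr le_rfl) (Set.mem_Ici.mpr (norm_nonneg _)) (norm_nonneg _)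
  have hφl : ∀ (i j : ℕ), ∀ s ∈ Set.Icc t (t+1), ψu s ≤ ψ ‖x j s - x i s‖ :=
    fun i j s hs => hψulb s (hIsub s hs).out.le i j
  have hψu0' : ∀ s ∈ Set.Icc t (t+1), 0 ≤ ψu s := fun s hs => hψunn s (hIsub s hs).out.le
  have hψuc : ContinuousWithinAt ψu (Set.Icc t (t+1)) t :=
    (hψucont t ht.le).mono (fun s hs => (hIsub s hs).out.le)
  have hd1 : ∀ i, ∀ s ∈ Set.Icc t (t+1), HasDerivAt (fun r => v i r k)
      (κ * ∑' j, (m j * ψ ‖x j s - x i s‖) *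
        (Real.sign (v j s k - v i s k) * |v j s k - v i s k| ^ α)) s := by
    intro i s hs
    exact component_deriv d κ α m ψ x v i s k ((hode i s (hIsub s hs)).2.1)
      ((hode i s (hIsub s hs)).2.2)
  constructor
  · exact core κ α hκ hα0 hα1 m hm0 hmS hm1 (fun i s => v i s k)
      (fun i j s => ψ ‖x j s - x i s‖) ψu t C ht hvB hφ1 hφl hψu0' hψuc hd1
  · have hd2 : ∀ i, ∀ s ∈ Set.Icc t (t+1), HasDerivAt (fun r => -(v i r k))
        (κ * ∑' j, (m j * ψ ‖x j s - x i s‖) *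
          (Real.sign (-(v j s k) - -(v i s k)) * |(-(v j s k)) - -(v i s k)| ^ α)) s := by
      intro i s hs
      have h := (hd1 i s hs).neg
      have he : -(κ * ∑' j, (m j * ψ ‖x j s - x i s‖) *
            (Real.sign (v j s k - v i s k) * |v j s k - v i s k| ^ α))
          = κ * ∑' j, (m j * ψ ‖x j s - x i s‖) *
            (Real.sign (-(v j s k) - -(v i s k)) * |(-(v j s k)) - -(v i s k)| ^ α) := by
        have hc : ∀ j : ℕ, (m j * ψ ‖x j s - x i s‖) *
            (Real.sign (-(v j s k) - -(v i s k)) * |(-(v j s k)) - -(v i s k)| ^ α)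
            = -((m j * ψ ‖x j s - x i s‖) *
              (Real.sign (v j s k - v i s k) * |v j s k - v i s k| ^ α)) := by
          intro j
          rw [show -(v j s k) - -(v i s k) = -(v j s k - v i s k) by ring,
            Real.sign_neg, abs_neg]
          ring
        rw [tsum_congr hc, tsum_neg]
        ring
      rw [← he]
      exact h
    have hvB' : ∀ i, ∀ s ∈ Set.Icc t (t+1), |-(v i s k)| ≤ C := by
      intro i s hs
      rw [abs_neg]
      exact hvB i s hs
    have hcore := core κ α hκ hα0 hα1 m hm0 hmS hm1 (fun i s => -(v i s k))
      (fun i j s => ψ ‖x j s - x i s‖) ψu t C ht hvB' hφ1 hφl hψu0' hψuc hd2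
    have e1 : (fun s => ⨆ i, -(v i s k)) = fun s => -(minf d v k s) := by
      funext s
      exact real_iSup_neg _
    rw [e1] at hcore
    have e2 : diniUR (fun s => -(minf d v k s)) t = -(diniLR (minf d v k) t) := by
      unfold diniUR diniLR
      rw [← real_limsup_neg]
      congr 1
      funext h
      ring
    rw [e2] at hcore
    have e3 : (∑' j, m j * |(⨆ i, -(v i t k)) - -(v j t k)| ^ α)
        = ∑' j, m j * |v j t k - minf d v k t| ^ α := by
      apply tsum_congr
      intro j
      have h4 : (⨆ i, -(v i t k)) = -(minf d v k t) := real_iSup_neg _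
      rw [h4, show -(minf d v k t) - -(v j t k) = v j t k - minf d v k t by ring]
    rw [e3] at hcore
    linarith [hcore]
end
end
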